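/- (Bias of the DiD estimator in linear SCMs, eq. (7).) Assume E[D²] > 0. Then the DiD estimate β̂ = (E[YD] − E[ZD])/E[D²] satisfies β̂ = β + α_d·(γ − α_z)·E[ε_u²]/E[D²]. Consequently, if α_d ≠ 0 and E[ε_u²] > 0, then β̂ = β if and only if γ = α_z; i.e., the DiD estimator is unbiased exactly when the latent confounder has the same direct causal effect on the pre-treatment and post-treatment outcomes (the common trend condition). -/

import Mathlib

open MeasureTheory ProbabilityTheory

/-- Bias of the DiD estimator in linear SCMs (eq. (7)):
    β̂ = β + α_d(γ − α_z)E[ε_u²]/E[D²]; hence, when α_d ≠ 0 and E[ε_u²] > 0,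
    β̂ = β iff γ = α_z (the common trend condition). -/
theorem did_bias
    {Ω : Type*} [MeasurableSpace Ω] {μ : MeasureTheory.Measure Ω}
    [MeasureTheory.IsProbabilityMeasure μ]
    (εu εz εd εy : Ω → ℝ)
    (hmu : Measurable εu) (hmz : Measurable εz) (hmd : Measurable εd) (hmy : Measurable εy)
    (hind : ProbabilityTheory.iIndepFun ![εu, εz, εd, εy] μ)
    (h0u : ∫ ω, εu ω ∂μ = 0) (h0z : ∫ ω, εz ω ∂μ = 0)
    (h0d : ∫ ω, εd ω ∂μ = 0) (h0y : ∫ ω, εy ω ∂μ = 0)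
    (hLu : ∀ n : ℕ, MeasureTheory.MemLp εu n μ) (hLz : ∀ n : ℕ, MeasureTheory.MemLp εz n μ)
    (hLd : ∀ n : ℕ, MeasureTheory.MemLp εd n μ) (hLy : ∀ n : ℕ, MeasureTheory.MemLp εy n μ)
    (αz αd β γ : ℝ) (Z D Y : Ω → ℝ)
    (hZ : ∀ ω, Z ω = αz * εu ω + εz ω)
    (hD : ∀ ω, D ω = αd * εu ω + εd ω)
    (hY : ∀ ω, Y ω = β * D ω + γ * εu ω + εy ω)
    (hD2 : 0 < ∫ ω, D ω ^ 2 ∂μ) :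
    ((∫ ω, Y ω * D ω ∂μ) - ∫ ω, Z ω * D ω ∂μ) / (∫ ω, D ω ^ 2 ∂μ) =
      β + αd * (γ - αz) * (∫ ω, (εu ω) ^ 2 ∂μ) / (∫ ω, D ω ^ 2 ∂μ) ∧
    (αd ≠ 0 → 0 < ∫ ω, (εu ω) ^ 2 ∂μ →
      (((∫ ω, Y ω * D ω ∂μ) - ∫ ω, Z ω * D ω ∂μ) / (∫ ω, D ω ^ 2 ∂μ) = β ↔
        γ = αz)) := by

  -- integrability of base variables and squares
  have hIu : Integrable εu μ := (hLu 1).integrable (by norm_num)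
  have hIz : Integrable εz μ := (hLz 1).integrable (by norm_num)
  have hId : Integrable εd μ := (hLd 1).integrable (by norm_num)
  have hIy : Integrable εy μ := (hLy 1).integrable (by norm_num)
  have hIu2 : Integrable (fun ω => εu ω ^ 2) μ := ((hLu 2).integrable_sq)
  have hId2 : Integrable (fun ω => εd ω ^ 2) μ := ((hLd 2).integrable_sq)
  -- pairwise independence
  have pair : ∀ i j : Fin 4, i ≠ j →
      IndepFun (![εu, εz, εd, εy] i) (![εu, εz, εd, εy] j) μ :=
    fun i j hij => hind.indepFun hij
  have i_uz : IndepFun εu εz μ := by simpa using pair 0 1 (by decide)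
  have i_ud : IndepFun εu εd μ := by simpa using pair 0 2 (by decide)
  have i_zd : IndepFun εz εd μ := by simpa using pair 1 2 (by decide)
  have i_yu : IndepFun εy εu μ := by simpa using pair 3 0 (by decide)
  have i_yd : IndepFun εy εd μ := by simpa using pair 3 2 (by decide)
  -- cross products: integrable and integral zero
  have I_ud : Integrable (fun ω => εu ω * εd ω) μ := i_ud.integrable_mul hIu hId
  have I_zu : Integrable (fun ω => εz ω * εu ω) μ := (i_uz.symm).integrable_mul hIz hIu
  have I_zd : Integrable (fun ω => εz ω * εd ω) μ := i_zd.integrable_mul hIz hId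
  have I_yu : Integrable (fun ω => εy ω * εu ω) μ := i_yu.integrable_mul hIy hIu
  have I_yd : Integrable (fun ω => εy ω * εd ω) μ := i_yd.integrable_mul hIy hId
  have E_ud : ∫ ω, εu ω * εd ω ∂μ = 0 := by
    have := i_ud.integral_mul_eq_mul_integral hIu.aestronglyMeasurable hId.aestronglyMeasurable
    simpa [h0u] using this
  have E_zu : ∫ ω, εz ω * εu ω ∂μ = 0 := by
    have := (i_uz.symm).integral_mul_eq_mul_integral hIz.aestronglyMeasurable hIu.aestronglyMeasurable
    simpa [h0z] using this
  have E_zd : ∫ ω, εz ω * εd ω ∂μ = 0 := by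
    have := i_zd.integral_mul_eq_mul_integral hIz.aestronglyMeasurable hId.aestronglyMeasurable
    simpa [h0z] using this
  have E_yu : ∫ ω, εy ω * εu ω ∂μ = 0 := by
    have := i_yu.integral_mul_eq_mul_integral hIy.aestronglyMeasurable hIu.aestronglyMeasurable
    simpa [h0y] using this
  have E_yd : ∫ ω, εy ω * εd ω ∂μ = 0 := by
    have := i_yd.integral_mul_eq_mul_integral hIy.aestronglyMeasurable hId.aestronglyMeasurable
    simpa [h0y] using this
  set Iu2 := ∫ ω, εu ω ^ 2 ∂μ with hIu2def
  set ID2 := ∫ ω, D ω ^ 2 ∂μ with hID2def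
  -- E[Z D]
  have hZD : ∫ ω, Z ω * D ω ∂μ = αz * αd * Iu2 := by
    have J1 : Integrable (fun ω => αd * (εz ω * εu ω) + εz ω * εd ω) μ :=
      (I_zu.const_mul _).add I_zd
    have J2 : Integrable (fun ω => αz * (εu ω * εd ω)
        + (αd * (εz ω * εu ω) + εz ω * εd ω)) μ := (I_ud.const_mul _).add J1
    have hfun : ∀ ω, Z ω * D ω =
        αz * αd * (εu ω ^ 2) + (αz * (εu ω * εd ω)
          + (αd * (εz ω * εu ω) + εz ω * εd ω)) := by
      intro ω; rw [hZ, hD]; ring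
    rw [integral_congr_ae (Filter.Eventually.of_forall hfun),
      integral_add (hIu2.const_mul _) J2,
      integral_add (I_ud.const_mul _) J1,
      integral_add (I_zu.const_mul _) I_zd,
      integral_const_mul, integral_const_mul, integral_const_mul,
      E_ud, E_zu, E_zd]
    ring
  -- E[D^2]
  have hD2eq : ID2 = αd ^ 2 * Iu2 + ∫ ω, εd ω ^ 2 ∂μ := by
    have J1 : Integrable (fun ω => (2 * αd) * (εu ω * εd ω) + εd ω ^ 2) μ :=
      (I_ud.const_mul _).add hId2
    have hfun : ∀ ω, D ω ^ 2 =
        αd ^ 2 * (εu ω ^ 2) + ((2 * αd) * (εu ω * εd ω) + εd ω ^ 2) := by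
      intro ω; rw [hD]; ring
    rw [hID2def, integral_congr_ae (Filter.Eventually.of_forall hfun),
      integral_add (hIu2.const_mul _) J1,
      integral_add (I_ud.const_mul _) hId2,
      integral_const_mul, integral_const_mul, E_ud]
    ring
  -- D^2 integrable
  have hID2int : Integrable (fun ω => D ω ^ 2) μ := by
    have hfun : ∀ ω, D ω ^ 2 =
        αd ^ 2 * (εu ω ^ 2) + ((2 * αd) * (εu ω * εd ω) + εd ω ^ 2) := by
      intro ω; rw [hD]; ring
    have : Integrable (fun ω => αd ^ 2 * (εu ω ^ 2)
        + ((2 * αd) * (εu ω * εd ω) + εd ω ^ 2)) μ :=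
      (hIu2.const_mul _).add ((I_ud.const_mul _).add hId2)
    exact this.congr (Filter.Eventually.of_forall fun ω => (hfun ω).symm)
  -- E[Y D]
  have hYD : ∫ ω, Y ω * D ω ∂μ = β * ID2 + γ * αd * Iu2 := by
    have J1 : Integrable (fun ω => αd * (εy ω * εu ω) + εy ω * εd ω) μ :=
      (I_yu.const_mul _).add I_yd
    have J2 : Integrable (fun ω => γ * (εu ω * εd ω)
        + (αd * (εy ω * εu ω) + εy ω * εd ω)) μ := (I_ud.const_mul _).add J1
    have J3 : Integrable (fun ω => γ * αd * (εu ω ^ 2) + (γ * (εu ω * εd ω)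
        + (αd * (εy ω * εu ω) + εy ω * εd ω))) μ := (hIu2.const_mul _).add J2
    have hfun : ∀ ω, Y ω * D ω =
        β * (D ω ^ 2) + (γ * αd * (εu ω ^ 2) + (γ * (εu ω * εd ω)
          + (αd * (εy ω * εu ω) + εy ω * εd ω))) := by
      intro ω; rw [hY, hD]; ring
    rw [integral_congr_ae (Filter.Eventually.of_forall hfun),
      integral_add (hID2int.const_mul _) J3,
      integral_add (hIu2.const_mul _) J2,
      integral_add (I_ud.const_mul _) J1,
      integral_add (I_yu.const_mul _) I_yd,
      integral_const_mul, integral_const_mul, integral_const_mul,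
      integral_const_mul, E_ud, E_yu, E_yd]
    ring
  have hID2ne : ID2 ≠ 0 := ne_of_gt hD2
  have main : ((∫ ω, Y ω * D ω ∂μ) - ∫ ω, Z ω * D ω ∂μ) / ID2 =
      β + αd * (γ - αz) * Iu2 / ID2 := by
    rw [hYD, hZD]
    field_simp
    ring
  refine ⟨main, fun had hu2 => ?_⟩
  rw [main]
  constructor
  · intro h
    have h' : αd * (γ - αz) * Iu2 / ID2 = 0 := by linarith
    have h'' : αd * (γ - αz) * Iu2 = 0 :=
      (div_eq_zero_iff.mp h').resolve_right hID2ne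
    have hγ : γ - αz = 0 := by
      rcases mul_eq_zero.mp h'' with h3 | h3
      · rcases mul_eq_zero.mp h3 with h4 | h4
        · exact absurd h4 had
        · exact h4
      · exact absurd h3 (ne_of_gt hu2)
    linarith
  · intro h
    rw [h]
    ring
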